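/- Let K ⊆ [0,1] be closed (or just arbitrary) and fix i ∈ ℕ and μ > 0. Then there exist γ > 0 and a set K' ⊆ K with λ(K \ K') < μ such that Ξ_{1/(i+1), γ}(K', K') holds, i.e., for every Z with λ(Z) < γ, H^r(K' \ Z) > H^r(K') − 1/(i+1). -/

import Mathlib

open MeasureTheory Set ENNReal

/-- The `r`-Hausdorff capacity of a set `X ⊆ ℝ`: the infimum of `∑ λ(I i)^r`
over all countable covers of `X` by closed intervals. -/
noncomputable def Hcap (r : ℝ) (X : Set ℝ) : ℝ≥0∞ :=
  ⨅ (I : ℕ → Set ℝ) (_ : ∀ i, ∃ a b : ℝ, I i = Set.Icc a b) (_ : X ⊆ ⋃ i, I i),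
    ∑' i, (volume (I i)) ^ r

/-- The relation `Ξ_{δ,ε}(X,Y)`: for every `Z` of Lebesgue (outer) measure less than `ε`,
`H^r(X ∩ Y \ Z) > H^r(Y) − δ` (phrased additively to avoid truncated subtraction). -/
def Xi (r δ ε : ℝ) (X Y : Set ℝ) : Prop :=
  ∀ Z : Set ℝ, volume Z < ENNReal.ofReal ε →
    Hcap r Y < Hcap r ((X ∩ Y) \ Z) + ENNReal.ofReal δ

lemma Hcap_le_one (r : ℝ) (hr0 : 0 < r) (X : Set ℝ) (hX : X ⊆ Set.Icc 0 1) :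
    Hcap r X ≤ 1 := by
  have hI : ∀ j : ℕ, ∃ a b : ℝ,
      (if j = 0 then Set.Icc (0:ℝ) 1 else Set.Icc 0 0) = Set.Icc a b := by
    intro j
    by_cases h : j = 0
    · exact ⟨0, 1, by simp [h]⟩
    · exact ⟨0, 0, by simp [h]⟩
  have hcov : X ⊆ ⋃ j, (if j = 0 then Set.Icc (0:ℝ) 1 else Set.Icc 0 0) := by
    intro x hx
    exact Set.mem_iUnion.2 ⟨0, by simpa using hX hx⟩
  calc Hcap r X
      ≤ ∑' j, (volume (if j = 0 then Set.Icc (0:ℝ) 1 else Set.Icc 0 0)) ^ r :=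
        iInf_le_of_le _ (iInf_le_of_le hI (iInf_le_of_le hcov le_rfl))
    _ = 1 := by
        rw [tsum_eq_single 0]
        · simp [Real.volume_Icc]
        · intro j hj
          simp [hj, Real.volume_Icc, ENNReal.zero_rpow_of_pos hr0]

theorem exists_stable_subset_single (r : ℝ) (hr0 : 0 < r) (hr1 : r < 1)
    (K : Set ℝ) (hK : K ⊆ Set.Icc 0 1) (i : ℕ) (μ : ℝ) (hμ : 0 < μ) :
    ∃ γ > 0, ∃ K' : Set ℝ, K' ⊆ K ∧ volume (K \ K') < ENNReal.ofReal μ ∧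
      Xi r (1 / (i + 1)) γ K' K' := by
  by_contra hcon
  push_neg at hcon
  simp only [Xi, not_forall, not_lt, exists_prop] at hcon
  set δ : ℝ≥0∞ := ENNReal.ofReal (1 / (i + 1)) with hδ
  have key : ∀ n : ℕ, ∃ K' : Set ℝ, K' ⊆ K ∧ volume (K \ K') < ENNReal.ofReal μ ∧
      Hcap r K' + n • δ ≤ Hcap r K := by
    intro n
    induction n with
    | zero =>
      exact ⟨K, subset_rfl, by simp [hμ], by simp⟩
    | succ n ih =>
      obtain ⟨K', hsub, hvol, hcap⟩ := ih
      have hv : (volume (K \ K')).toReal < μ := ENNReal.toReal_lt_of_lt_ofReal hvol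
      set v := (volume (K \ K')).toReal with hvdef
      have hvfin : volume (K \ K') ≠ ⊤ := hvol.ne_top
      have hveq : volume (K \ K') = ENNReal.ofReal v := (ENNReal.ofReal_toReal hvfin).symm
      set γ := (μ - v) / 2 with hγ
      have hγpos : 0 < γ := by rw [hγ]; linarith
      obtain ⟨Z, hZvol, hZcap⟩ := hcon γ hγpos K' hsub hvol
      refine ⟨K' \ Z, (Set.diff_subset).trans hsub, ?_, ?_⟩
      · have hsubset : K \ (K' \ Z) ⊆ (K \ K') ∪ Z := by
          intro x hx
          by_cases hxK : x ∈ K'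
          · right
            rcases hx with ⟨hx1, hx2⟩
            by_contra hxZ
            exact hx2 ⟨hxK, hxZ⟩
          · exact Or.inl ⟨hx.1, hxK⟩
        calc volume (K \ (K' \ Z)) ≤ volume ((K \ K') ∪ Z) := measure_mono hsubset
          _ ≤ volume (K \ K') + volume Z := measure_union_le _ _
          _ < ENNReal.ofReal v + ENNReal.ofReal γ := by
              rw [hveq]
              exact ENNReal.add_lt_add_left (by simp) hZvol
          _ ≤ ENNReal.ofReal (v + γ) := by
              rw [ENNReal.ofReal_add (by rw [hvdef]; exact ENNReal.toReal_nonneg) hγpos.le]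
          _ < ENNReal.ofReal μ := by
              apply ENNReal.ofReal_lt_ofReal_iff_of_nonneg (by positivity) |>.2
              linarith
      · rw [Set.inter_self] at hZcap
        calc Hcap r (K' \ Z) + (n + 1) • δ
            = (Hcap r (K' \ Z) + δ) + n • δ := by
              rw [succ_nsmul]; ring
          _ ≤ Hcap r K' + n • δ := add_le_add hZcap le_rfl
          _ ≤ Hcap r K := hcap
  obtain ⟨K', hsub, hvol, hcap⟩ := key (i + 2)
  have h1 : Hcap r K ≤ 1 := Hcap_le_one r hr0 K hK
  have h2 : (1 : ℝ≥0∞) < (i + 2) • δ := by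
    rw [nsmul_eq_mul, hδ]
    rw [show ((i + 2 : ℕ) : ℝ≥0∞) = ENNReal.ofReal ((i : ℝ) + 2) by
      rw [ENNReal.ofReal_natCast (n := i + 2) |>.symm]; push_cast; ring_nf]
    rw [← ENNReal.ofReal_mul (by positivity)]
    rw [show (1 : ℝ≥0∞) = ENNReal.ofReal 1 by simp]
    apply (ENNReal.ofReal_lt_ofReal_iff_of_nonneg (by norm_num)).2
    rw [mul_one_div, lt_div_iff₀ (by positivity)]
    linarith
  have : (1 : ℝ≥0∞) < 1 :=
    lt_of_lt_of_le h2 (le_trans (le_add_self) (hcap.trans h1))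
  exact absurd this (lt_irrefl 1)
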